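/- Fix a positive integer d and x, ε ∈ (0,1). Set t₁ = xε/(1 − x(1−ε)), and for k ∈ [0,1] define N₁(k) = 1 − k(1−x), N₂(k) = (1−ε)x + kεx and Z(k) = t₁·k·(1−x)·(N₁(k)^d − N₂(k)^d). Then every maximizer k* of Z over [0,1] satisfies k* ≥ (2 + d(1−x) − √(d²(1−x)² + 4x)) / (2(d+1)(1−x)). -/

import Mathlib

open Finset in
noncomputable def stmt8S (a b e : ℝ) (d : ℕ) : ℝ → ℝ :=
  fun k => ∑ i ∈ Finset.range d, (1 - k * a) ^ i * (b + k * e) ^ (d - 1 - i)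

open Finset in
noncomputable def stmt8S' (a b e : ℝ) (d : ℕ) : ℝ → ℝ :=
  fun k => ∑ i ∈ Finset.range d,
    (((i : ℝ) * (1 - k * a) ^ (i - 1) * (-(1 * a))) * (b + k * e) ^ (d - 1 - i)
      + (1 - k * a) ^ i * (((d - 1 - i : ℕ) : ℝ) * (b + k * e) ^ (d - 1 - i - 1) * (1 * e)))

lemma stmt8S_key (a b e : ℝ) (d : ℕ) (k : ℝ) :
    stmt8S a b e d k * ((1 - k * a) - (b + k * e)) = (1 - k * a) ^ d - (b + k * e) ^ d :=
  geom_sum₂_mul (1 - k * a) (b + k * e) d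

lemma stmt8S_hasDeriv (a b e : ℝ) (d : ℕ) (k : ℝ) :
    HasDerivAt (stmt8S a b e d) (stmt8S' a b e d k) k := by
  apply HasDerivAt.fun_sum
  intro i _
  have h1 : HasDerivAt (fun y : ℝ => 1 - y * a) (-(1 * a)) k :=
    ((hasDerivAt_id k).mul_const a).const_sub 1
  have h2 : HasDerivAt (fun y : ℝ => b + y * e) (1 * e) k :=
    ((hasDerivAt_id k).mul_const e).const_add b
  exact (h1.pow i).mul (h2.pow (d - 1 - i))

lemma stmt8S_pos {a b e : ℝ} (d : ℕ) (hd : 0 < d) {k : ℝ}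
    (h1 : 0 < 1 - k * a) (h2 : 0 < b + k * e) : 0 < stmt8S a b e d k := by
  apply Finset.sum_pos
  · intro i _
    exact mul_pos (pow_pos h1 i) (pow_pos h2 _)
  · exact Finset.nonempty_range_iff.mpr (by omega)

lemma stmt8S_bound {a b e : ℝ} (d : ℕ) (hd : 0 < d) {k : ℝ}
    (ha : 0 < a) (he : 0 ≤ e)
    (h1 : 0 < 1 - k * a) (h2 : 0 < b + k * e) :
    -(a * ((d : ℝ) - 1)) * stmt8S a b e d k ≤ (1 - k * a) * stmt8S' a b e d k := by
  unfold stmt8S stmt8S'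
  rw [Finset.mul_sum, Finset.mul_sum]
  apply Finset.sum_le_sum
  intro i hi
  have hiR : (i : ℝ) ≤ (d : ℝ) - 1 := by
    have hile : i ≤ d - 1 := by
      have := Finset.mem_range.mp hi; omega
    have := (Nat.cast_le (α := ℝ)).mpr hile
    rwa [Nat.cast_sub hd, Nat.cast_one] at this
  have hT1 : (0:ℝ) < (1 - k * a) ^ i := pow_pos h1 i
  have hT2 : (0:ℝ) < (b + k * e) ^ (d - 1 - i) := pow_pos h2 _
  have hsecond : 0 ≤ (1 - k * a) *
      ((1 - k * a) ^ i * (((d - 1 - i : ℕ) : ℝ) * (b + k * e) ^ (d - 1 - i - 1) * (1 * e))) := by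
    positivity
  have hfirst : -(a * ((d:ℝ) - 1)) * ((1 - k * a) ^ i * (b + k * e) ^ (d - 1 - i)) ≤
      (1 - k * a) * (((i : ℝ) * (1 - k * a) ^ (i - 1) * (-(1 * a)))
        * (b + k * e) ^ (d - 1 - i)) := by
    rcases Nat.eq_zero_or_pos i with h0 | hpos
    · subst h0
      simp only [Nat.cast_zero, zero_mul, mul_zero]
      have hdn : (0:ℝ) ≤ (d:ℝ) - 1 := by simpa using hiR
      nlinarith [mul_pos hT1 hT2, mul_nonneg (mul_nonneg ha.le hdn) (mul_pos hT1 hT2).le]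
    · have hps : (1 - k * a) * (1 - k * a) ^ (i - 1) = (1 - k * a) ^ i := by
        rw [← pow_succ']
        congr 1
        omega
      have heq : (1 - k * a) * (((i : ℝ) * (1 - k * a) ^ (i - 1) * (-(1 * a)))
            * (b + k * e) ^ (d - 1 - i))
          = -(a * (i : ℝ)) * ((1 - k * a) ^ i * (b + k * e) ^ (d - 1 - i)) := by
        rw [← hps]; ring
      rw [heq]
      apply mul_le_mul_of_nonneg_right _ (le_of_lt (mul_pos hT1 hT2))
      nlinarith
  calc -(a * ((d:ℝ) - 1)) * ((1 - k * a) ^ i * (b + k * e) ^ (d - 1 - i))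
      ≤ (1 - k * a) * (((i : ℝ) * (1 - k * a) ^ (i - 1) * (-(1 * a)))
          * (b + k * e) ^ (d - 1 - i))
        + (1 - k * a) * ((1 - k * a) ^ i *
          (((d - 1 - i : ℕ) : ℝ) * (b + k * e) ^ (d - 1 - i - 1) * (1 * e))) := by linarith
    _ = (1 - k * a) * (((i : ℝ) * (1 - k * a) ^ (i - 1) * (-(1 * a)))
          * (b + k * e) ^ (d - 1 - i)
        + (1 - k * a) ^ i *
          (((d - 1 - i : ℕ) : ℝ) * (b + k * e) ^ (d - 1 - i - 1) * (1 * e))) := by ring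

set_option maxHeartbeats 1600000 in
/-- Lower bound on the revenue-maximizing policy in the step-demand monomial
model: with `t₁ = xε/(1−x(1−ε))`, `N₁(k) = 1 − k(1−x)`, `N₂(k) = (1−ε)x + kεx`
and revenue `Z(k) = t₁·k·(1−x)·(N₁(k)^d − N₂(k)^d)`, every maximizer `k*` of
`Z` on `[0,1]` satisfies
`k* ≥ (2 + d(1−x) − √(d²(1−x)² + 4x)) / (2(d+1)(1−x))`. -/
theorem stmt8 (d : ℕ) (hd : 0 < d)
    (x ε : ℝ) (hx : x ∈ Set.Ioo (0 : ℝ) 1) (hε : ε ∈ Set.Ioo (0 : ℝ) 1)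
    (t₁ : ℝ) (ht₁ : t₁ = x * ε / (1 - x * (1 - ε)))
    (N₁ N₂ Z : ℝ → ℝ)
    (hN₁ : ∀ k, N₁ k = 1 - k * (1 - x))
    (hN₂ : ∀ k, N₂ k = (1 - ε) * x + k * ε * x)
    (hZ : ∀ k, Z k = t₁ * k * (1 - x) * ((N₁ k) ^ d - (N₂ k) ^ d))
    (kstar : ℝ) (hks : kstar ∈ Set.Icc (0 : ℝ) 1)
    (hmax : ∀ k ∈ Set.Icc (0 : ℝ) 1, Z k ≤ Z kstar) :
    kstar ≥ (2 + (d : ℝ) * (1 - x) - Real.sqrt ((d : ℝ) ^ 2 * (1 - x) ^ 2 + 4 * x)) /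
      (2 * ((d : ℝ) + 1) * (1 - x)) := by
  obtain ⟨hx0, hx1⟩ := hx
  obtain ⟨hε0, hε1⟩ := hε
  have ha : (0:ℝ) < 1 - x := by linarith
  have hd1 : (1:ℝ) ≤ (d:ℝ) := by exact_mod_cast hd
  set a : ℝ := 1 - x with ha_def
  clear_value a
  have ha1 : a < 1 := by rw [ha_def]; linarith
  set e : ℝ := ε * x with he_def
  clear_value e
  set b : ℝ := (1 - ε) * x with hb_def
  clear_value b
  have hbpos : 0 < b := by rw [hb_def]; exact mul_pos (by linarith) hx0
  have hepos : 0 < e := by rw [he_def]; exact mul_pos hε0 hx0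
  -- the bound κ
  set s : ℝ := Real.sqrt ((d : ℝ) ^ 2 * a ^ 2 + 4 * x) with hs_def
  clear_value s
  have hDnn : (0:ℝ) ≤ (d : ℝ) ^ 2 * a ^ 2 + 4 * x := by nlinarith [sq_nonneg ((d:ℝ) * a)]
  have hs2 : s ^ 2 = (d : ℝ) ^ 2 * a ^ 2 + 4 * x := by rw [hs_def]; exact Real.sq_sqrt hDnn
  have hs0 : 0 ≤ s := by rw [hs_def]; exact Real.sqrt_nonneg _
  have hda : (0:ℝ) < (d:ℝ) * a := mul_pos (by linarith) ha
  have hm : (0:ℝ) < 2 + (d:ℝ) * a := by linarith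
  have hsm : s < 2 + (d:ℝ) * a := by nlinarith [hs2, hs0, hm, hda]
  have hden : (0:ℝ) < 2 * ((d:ℝ) + 1) * a := by nlinarith
  set κ : ℝ := (2 + (d : ℝ) * a - s) / (2 * ((d : ℝ) + 1) * a) with hκ_def
  clear_value κ
  have hκ0 : 0 < κ := by rw [hκ_def]; exact div_pos (by linarith) hden
  have hκmul : 2 + (d:ℝ) * a - s = 2 * ((d:ℝ) + 1) * a * κ := by
    rw [hκ_def, mul_div_cancel₀ _ (ne_of_gt hden)]
  -- Q(κ) = 0
  have hQκ : ((d:ℝ) + 1) * a * κ ^ 2 - (2 + (d:ℝ) * a) * κ + 1 = 0 := by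
    have hG4 : (4 * a * ((d:ℝ) + 1)) *
        (((d:ℝ) + 1) * a * κ ^ 2 - (2 + (d:ℝ) * a) * κ + 1) = 0 := by
      linear_combination (2 + (d:ℝ) * a + s - 2 * ((d:ℝ) + 1) * a * κ) * hκmul + hs2 + 4 * ha_def
    have h4 : (4 * a * ((d:ℝ) + 1)) ≠ 0 := by nlinarith
    exact (mul_eq_zero.mp hG4).resolve_left h4
  have hQpos : ∀ k : ℝ, 0 ≤ k → k < κ →
      0 < ((d:ℝ) + 1) * a * k ^ 2 - (2 + (d:ℝ) * a) * k + 1 := by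
    intro k hk0 hkκ
    have h2 : ((d:ℝ) + 1) * a * (k + κ) - (2 + (d:ℝ) * a) < 0 := by
      nlinarith [hκmul, hs0, mul_pos (mul_pos (show (0:ℝ) < (d:ℝ) + 1 by linarith) ha)
        (sub_pos.mpr hkκ)]
    have h3 : ((d:ℝ) + 1) * a * k ^ 2 - (2 + (d:ℝ) * a) * k + 1
        = (κ - k) * (0 - (((d:ℝ) + 1) * a * (k + κ) - (2 + (d:ℝ) * a)))
          + (((d:ℝ) + 1) * a * κ ^ 2 - (2 + (d:ℝ) * a) * κ + 1) := by ring
    rw [h3, hQκ]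
    have h5 := mul_pos (sub_pos.mpr hkκ) (neg_pos.mpr h2)
    nlinarith [h5]
  have hκhalf : κ ≤ 1 / 2 := by
    by_contra h
    push_neg at h
    have := hQpos (1/2) (by norm_num) h
    nlinarith [this, mul_nonneg ha.le (show (0:ℝ) ≤ (d:ℝ) - 1 by linarith)]
  -- rewrite Z as C * (k * (1-k) * S k)
  set c : ℝ := a + e with hc_def
  clear_value c
  have hcpos : 0 < c := by rw [hc_def]; linarith
  have ht₁pos : 0 < t₁ := by
    rw [ht₁]
    apply div_pos (mul_pos hx0 hε0)
    nlinarith [mul_pos hx0 hε0]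
  set C : ℝ := t₁ * a * c with hC_def
  clear_value C
  have hCpos : 0 < C := by rw [hC_def]; exact mul_pos (mul_pos ht₁pos ha) hcpos
  have hZS : ∀ k : ℝ, Z k = C * (k * (1 - k) * stmt8S a b e d k) := by
    intro k
    rw [hZ, hN₁, hN₂]
    have hkey := stmt8S_key a b e d k
    have h3 : (1 - k * a) - (b + k * e) = (1 - k) * c := by
      simp only [hc_def, hb_def, he_def, ha_def]; ring
    rw [h3] at hkey
    have h2 : b + k * ε * x = b + k * e := by rw [he_def]; ring
    rw [h2, ← hkey, hC_def]
    ring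
  -- derivative of Z
  have hGderiv : ∀ k : ℝ, HasDerivAt (fun y => C * (y * (1 - y) * stmt8S a b e d y))
      (C * ((1 * (1 - k) + k * (-1)) * stmt8S a b e d k
        + k * (1 - k) * stmt8S' a b e d k)) k := by
    intro k
    have h1 : HasDerivAt (fun y : ℝ => 1 - y) (-1) k := by
      simpa using (hasDerivAt_id k).const_sub 1
    have h2 : HasDerivAt (fun y : ℝ => y * (1 - y)) (1 * (1 - k) + k * (-1)) k :=
      (hasDerivAt_id k).mul h1
    exact (h2.mul (stmt8S_hasDeriv a b e d k)).const_mul C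
  have hZfun : Z = fun y => C * (y * (1 - y) * stmt8S a b e d y) := funext hZS
  -- positivity of the derivative on (0, κ)
  have hderivpos : ∀ k ∈ Set.Ioo 0 κ,
      0 < C * ((1 * (1 - k) + k * (-1)) * stmt8S a b e d k
        + k * (1 - k) * stmt8S' a b e d k) := by
    intro k hk
    obtain ⟨hk0, hkκ⟩ := hk
    have hk12 : k < 1 / 2 := lt_of_lt_of_le hkκ hκhalf
    have hN1pos : 0 < 1 - k * a := by
      nlinarith [mul_pos (show (0:ℝ) < 1/2 - k by linarith) ha]
    have hN2pos : 0 < b + k * e := by nlinarith [mul_pos hk0 hepos]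
    have hSpos : 0 < stmt8S a b e d k := stmt8S_pos d hd hN1pos hN2pos
    have hbound := stmt8S_bound d hd ha (le_of_lt hepos) hN1pos hN2pos
    have hQ := hQpos k (le_of_lt hk0) hkκ
    have hinner : 0 < (1 * (1 - k) + k * (-1)) * stmt8S a b e d k
        + k * (1 - k) * stmt8S' a b e d k := by
      have hkk : (0:ℝ) ≤ k * (1 - k) := mul_nonneg hk0.le (by linarith)
      have h4 : k * (1 - k) * (-(a * ((d:ℝ) - 1)) * stmt8S a b e d k)
          ≤ k * (1 - k) * ((1 - k * a) * stmt8S' a b e d k) :=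
        mul_le_mul_of_nonneg_left hbound hkk
      have hQS : 0 < stmt8S a b e d k *
          (((d:ℝ) + 1) * a * k ^ 2 - (2 + (d:ℝ) * a) * k + 1) := mul_pos hSpos hQ
      by_contra hn
      push_neg at hn
      nlinarith [mul_nonneg (le_of_lt hN1pos) (neg_nonneg.mpr hn)]
    exact mul_pos hCpos hinner
  -- Z is strictly monotone on [0, κ]
  have hsmZ : StrictMonoOn Z (Set.Icc 0 κ) := by
    rw [hZfun]
    apply strictMonoOn_of_deriv_pos (convex_Icc 0 κ)
    · exact fun k _ => (hGderiv k).differentiableAt.continuousAt.continuousWithinAt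
    · intro k hk
      rw [interior_Icc] at hk
      rw [(hGderiv k).deriv]
      exact hderivpos k hk
  -- conclude
  rw [ge_iff_le]
  by_contra hlt
  push_neg at hlt
  have h1 : Z kstar < Z κ :=
    hsmZ ⟨hks.1, le_of_lt hlt⟩ ⟨le_of_lt hκ0, le_refl κ⟩ hlt
  have h2 : Z κ ≤ Z kstar := hmax κ ⟨le_of_lt hκ0, by linarith⟩
  linarith
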